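/- Let G be a finite simple graph and k a positive integer. Then the vertex set of G can be partitioned into at most k sets each inducing a linear forest if and only if there exist a coloring c : V(G) → {1,...,k} and a linear order ≺ on V(G) such that for every edge {u,w} of G with c(u) = c(w), the vertices u and w are consecutive in ≺ (i.e., there is no vertex v with u ≺ v ≺ w or w ≺ v ≺ u). -/

import Mathlib

open SimpleGraph Walk

section Aux

/-- The graph of same-colored edges. -/
private def colorGraph {V : Type*} (G : SimpleGraph V) {k : ℕ} (c : V → Fin k) :
    SimpleGraph V where
  Adj u w := G.Adj u w ∧ c u = c w
  symm := ⟨fun _ _ h => ⟨h.1.symm, h.2.symm⟩⟩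
  loopless := ⟨fun v h => G.loopless.irrefl v h.1⟩

private lemma acyclic_of_consec {V : Type*} (G' : SimpleGraph V) (f : V → ℕ)
    (hfinj : Function.Injective f)
    (h : ∀ u w, G'.Adj u w → f u + 1 = f w ∨ f w + 1 = f u) : G'.IsAcyclic := by
  intro v c hc
  classical
  obtain ⟨m, hm, hmax⟩ : ∃ m ∈ c.support, ∀ x ∈ c.support, f x ≤ f m := by
    obtain ⟨m, hm, hmax⟩ := Finset.exists_max_image c.support.toFinset f
      ⟨v, by simp [Walk.start_mem_support]⟩
    exact ⟨m, by simpa using hm, fun x hx => hmax x (by simpa using hx)⟩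
  have hc' : (c.rotate m hm).IsCycle := hc.rotate hm
  have hsup : ∀ x ∈ (c.rotate m hm).support, f x ≤ f m := by
    intro x hx
    rcases (Walk.mem_support_iff _).mp hx with rfl | hx
    · exact le_refl _
    · exact hmax x (List.mem_of_mem_tail ((Walk.support_rotate c m hm).mem_iff.mp hx))
  obtain ⟨a, ha, q, hq⟩ : ∃ (a : V) (ha : G'.Adj m a) (q : G'.Walk a m),
      c.rotate m hm = Walk.cons ha q := by
    cases hcr : c.rotate m hm with
    | nil => exact absurd (hcr ▸ hc') Walk.IsCycle.not_of_nil
    | cons ha q => exact ⟨_, ha, q, rfl⟩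
  rw [hq] at hc' hsup
  have hlen : 2 ≤ q.length := by
    have := hc'.three_le_length
    simpa using this
  -- a has f a + 1 = f m
  have hfa : f a + 1 = f m := by
    rcases h m a ha with h1 | h1
    · exfalso
      have : f a ≤ f m := hsup a (by simp [Walk.start_mem_support])
      omega
    · exact h1
  obtain ⟨x, r, hx, hconcat⟩ := Walk.exists_cons_eq_concat ha q
  have hxs : x ∈ (Walk.cons ha q).support := by
    rw [hconcat, Walk.concat_eq_append]
    simp [Walk.mem_support_append_iff, Walk.end_mem_support]
  have hfx : f x + 1 = f m := by
    rcases h x m hx with h1 | h1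
    · exact h1
    · exfalso
      have : f x ≤ f m := hsup x hxs
      have : x ≠ m := hx.ne
      have : f x ≠ f m := fun hh => this (hfinj hh)
      omega
  have hxa : x = a := hfinj (by omega)
  -- edges equation
  have hedges : s(m, a) :: q.edges = r.edges ++ [s(x, m)] := by
    have := congrArg Walk.edges hconcat
    simpa [Walk.edges_concat] using this
  have hrne : r.edges ≠ [] := by
    have hl := congrArg Walk.length hconcat
    rw [Walk.length_concat] at hl
    simp only [Walk.length_cons] at hl
    have : r.edges.length = r.length := Walk.length_edges r
    intro hnil
    rw [hnil] at this
    simp at this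
    omega
  obtain ⟨e, es, hre⟩ := List.exists_cons_of_ne_nil hrne
  rw [hre] at hedges
  have h2 : q.edges = es ++ [s(x, m)] := by
    exact (by simpa using hedges : _ ∧ _).2
  have hmem : s(m, a) ∈ q.edges := by
    rw [h2, hxa]
    simp [Sym2.eq_swap]
  exact ((Walk.cons_isCycle_iff q ha).mp hc').2 hmem


private lemma exists_leaf {V : Type*} [Fintype V] (G' : SimpleGraph V) (hac : G'.IsAcyclic)
    (s : Finset V) (hs : s.Nonempty) :
    ∃ u ∈ s, ∀ y z, y ∈ s → z ∈ s → G'.Adj u y → G'.Adj u z → y = z := by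
  classical
  obtain ⟨u0, hu0⟩ := hs
  set S : Set ℕ := {n | ∃ (u w : V) (p : G'.Walk u w), p.IsPath ∧
    (∀ x ∈ p.support, x ∈ s) ∧ p.length = n} with hS
  have h0 : (0 : ℕ) ∈ S := ⟨u0, u0, Walk.nil, Walk.IsPath.nil, by simpa using hu0, rfl⟩
  have hbdd : BddAbove S := by
    refine ⟨Fintype.card V, fun n hn => ?_⟩
    obtain ⟨u, w, p, hp, _, rfl⟩ := hn
    exact le_of_lt hp.length_lt
  have hmem : sSup S ∈ S := Nat.sSup_mem ⟨0, h0⟩ hbdd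
  obtain ⟨u, w, p, hp, hsupp, hlen⟩ := hmem
  have hmax : ∀ m ∈ S, m ≤ sSup S := fun m hm => le_csSup hbdd hm
  refine ⟨u, hsupp u (Walk.start_mem_support p), ?_⟩
  -- every neighbor of u in s lies on p
  have hins : ∀ y, y ∈ s → G'.Adj u y → y ∈ p.support := by
    intro y hy hadj
    by_contra hyn
    have hpath : (Walk.cons hadj.symm p).IsPath :=
      (Walk.cons_isPath_iff _ _).mpr ⟨hp, hyn⟩
    have : p.length + 1 ∈ S := ⟨y, w, Walk.cons hadj.symm p, hpath, by
      intro x hx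
      rcases (by simpa [Walk.support_cons] using hx : x = y ∨ x ∈ p.support) with rfl | hx
      · exact hy
      · exact hsupp x hx, by simp⟩
    have := hmax _ this
    omega
  -- every neighbor of u in s equals p.getVert 1
  have hsnd : ∀ y, y ∈ s → G'.Adj u y → y = p.getVert 1 := by
    intro y hy hadj
    have hys : y ∈ p.support := hins y hy hadj
    have hyu : y ≠ u := hadj.ne'
    have htu : (p.takeUntil y hys).IsPath := hp.takeUntil hys
    have hp1 : (Walk.cons hadj.symm Walk.nil : G'.Walk y u).IsPath := by
      refine (Walk.cons_isPath_iff _ _).mpr ⟨Walk.IsPath.nil, ?_⟩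
      simp [hyu]
    have hpq := hac.path_unique (⟨Walk.cons hadj.symm Walk.nil, hp1⟩ : G'.Path y u)
      ⟨(p.takeUntil y hys).reverse, htu.reverse⟩
    have hval : (Walk.cons hadj.symm Walk.nil : G'.Walk y u)
        = (p.takeUntil y hys).reverse := congrArg Subtype.val hpq
    have htake : p.takeUntil y hys = Walk.cons hadj Walk.nil := by
      have := congrArg Walk.reverse hval
      rw [Walk.reverse_reverse] at this
      rw [← this]
      simp [Walk.reverse_cons]
    have hspec := p.take_spec hys
    rw [htake] at hspec
    rw [← hspec]
    simp [Walk.cons_append, Walk.getVert_cons_succ, Walk.getVert_zero]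
  intro y z hy hz h1 h2
  rw [hsnd y hy h1, hsnd z hz h2]


private lemma exists_list {V : Type*} [Fintype V] [DecidableEq V] (G' : SimpleGraph V)
    (hac : G'.IsAcyclic) (hdeg : ∀ v : V, {w | G'.Adj v w}.ncard ≤ 2) :
    ∀ (n : ℕ) (s : Finset V), s.card = n → ∀ v ∈ s,
      (∀ y z, y ∈ s → z ∈ s → G'.Adj v y → G'.Adj v z → y = z) →
      ∃ l : List V, l.Nodup ∧ l.toFinset = s ∧ l.idxOf v = 0 ∧
        ∀ u w, u ∈ s → w ∈ s → G'.Adj u w →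
          (l.idxOf w = l.idxOf u + 1 ∨ l.idxOf u = l.idxOf w + 1) := by
  intro n
  induction n with
  | zero =>
    intro s hcard v hv _
    simp [Finset.card_eq_zero.mp hcard] at hv
  | succ n ih =>
    intro s hcard v hv hv1
    set s' := s.erase v with hs'
    have hcard' : s'.card = n := by
      rw [hs', Finset.card_erase_of_mem hv, hcard]
      omega
    -- helper: build the list given a starting vertex u of s' satisfying the IH hyps
    have build : ∀ u ∈ s', (∀ y z, y ∈ s' → z ∈ s' → G'.Adj u y → G'.Adj u z → y = z) →
        (∀ w ∈ s', G'.Adj v w → w = u) →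
        ∃ l : List V, l.Nodup ∧ l.toFinset = s ∧ l.idxOf v = 0 ∧
        ∀ u' w', u' ∈ s → w' ∈ s → G'.Adj u' w' →
          (l.idxOf w' = l.idxOf u' + 1 ∨ l.idxOf u' = l.idxOf w' + 1) := by
      intro u hu hu1 huniq
      obtain ⟨l', hnd', hfin', hidx', hcons'⟩ := ih s' hcard' u hu hu1
      have hvl' : v ∉ l' := by
        intro hvm
        have : v ∈ s' := hfin' ▸ List.mem_toFinset.mpr hvm
        exact (Finset.mem_erase.mp this).1 rfl
      have hul' : u ∈ l' := by
        rw [← List.mem_toFinset, hfin']; exact hu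
      refine ⟨v :: l', List.nodup_cons.mpr ⟨hvl', hnd'⟩, ?_, by simp, ?_⟩
      · rw [List.toFinset_cons, hfin', hs', Finset.insert_erase hv]
      · intro u' w' hu's hw's hadj
        have hidx_ne : ∀ x, x ≠ v → (v :: l').idxOf x = l'.idxOf x + 1 := by
          intro x hx
          rw [List.idxOf_cons_ne _ (Ne.symm hx)]
        have huv : u ≠ v := (Finset.mem_erase.mp hu).1
        by_cases hu'v : u' = v
        · have hadj' : G'.Adj v w' := hu'v ▸ hadj
          have hw'v : w' ≠ v := fun h => G'.loopless.irrefl v (h ▸ hadj')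
          have hw's' : w' ∈ s' := Finset.mem_erase.mpr ⟨hw'v, hw's⟩
          have hw'u : w' = u := huniq w' hw's' hadj'
          left
          rw [hu'v, List.idxOf_cons_self, hw'u, hidx_ne u huv, hidx']
        · by_cases hw'v : w' = v
          · have hadj' : G'.Adj v u' := hw'v ▸ hadj.symm
            have hu's' : u' ∈ s' := Finset.mem_erase.mpr ⟨hu'v, hu's⟩
            have hu'u : u' = u := huniq u' hu's' hadj'
            right
            rw [hw'v, List.idxOf_cons_self, hu'u, hidx_ne u huv, hidx']
          · have hu's' : u' ∈ s' := Finset.mem_erase.mpr ⟨hu'v, hu's⟩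
            have hw's' : w' ∈ s' := Finset.mem_erase.mpr ⟨hw'v, hw's⟩
            rcases hcons' u' w' hu's' hw's' hadj with h1 | h1
            · left; rw [hidx_ne u' hu'v, hidx_ne w' hw'v, h1]
            · right; rw [hidx_ne u' hu'v, hidx_ne w' hw'v, h1]
    by_cases hA : ∃ u ∈ s', G'.Adj v u
    · obtain ⟨u, hu, hadj⟩ := hA
      have huniq : ∀ w ∈ s', G'.Adj v w → w = u := by
        intro w hw h1
        exact hv1 w u (Finset.mem_of_mem_erase hw) (Finset.mem_of_mem_erase hu) h1 hadj
      have hu1 : ∀ y z, y ∈ s' → z ∈ s' → G'.Adj u y → G'.Adj u z → y = z := by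
        intro y z hy hz h1 h2
        by_contra hne
        have hyv : y ≠ v := (Finset.mem_erase.mp hy).1
        have hzv : z ≠ v := (Finset.mem_erase.mp hz).1
        have hsub : ({v, y, z} : Set V) ⊆ {w | G'.Adj u w} := by
          intro x hx
          rcases hx with rfl | rfl | rfl
          · exact hadj.symm
          · exact h1
          · exact h2
        have h3 : ({v, y, z} : Set V).ncard = 3 := by
          rw [Set.ncard_insert_of_notMem (by simp [Ne.symm hyv, Ne.symm hzv]) (Set.toFinite _),
            Set.ncard_pair hne]
        have := Set.ncard_le_ncard hsub (Set.toFinite _)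
        have := hdeg u
        omega
      exact build u hu hu1 huniq
    · push_neg at hA
      by_cases hs'ne : s'.Nonempty
      · obtain ⟨u, hu, hu1⟩ := exists_leaf G' hac s' hs'ne
        exact build u hu hu1 (fun w hw h1 => absurd h1 (hA w hw))
      · have hsv : s = {v} := by
          rw [Finset.not_nonempty_iff_eq_empty] at hs'ne
          have := (Finset.erase_eq_empty_iff s v).mp hs'ne
          rcases this with h | h
          · exact absurd (h ▸ hv) (by simp)
          · exact h
        refine ⟨[v], by simp, by simp [hsv], by simp, ?_⟩
        intro u' w' hu' hw' hadj
        rw [hsv, Finset.mem_singleton] at hu' hw'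
        subst hu'; subst hw'
        exact absurd hadj (G'.loopless.irrefl _)


private lemma lift_walk {V : Type*} {G : SimpleGraph V} {U : Set V} :
    ∀ {u w : V} (p : G.Walk u w) (hu : u ∈ U) (hw : w ∈ U),
    (∀ x ∈ p.support, x ∈ U) →
    ∃ q : (G.induce U).Walk ⟨u, hu⟩ ⟨w, hw⟩,
      q.support.map Subtype.val = p.support ∧
      q.edges.map (Sym2.map Subtype.val) = p.edges := by
  intro u w p
  induction p with
  | nil =>
    intro hu hw _
    exact ⟨Walk.nil, by simp, by simp⟩
  | @cons a b w h p ih =>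
    intro hu hw hs
    have hb : b ∈ U := hs b (by simp)
    obtain ⟨q, hq1, hq2⟩ := ih hb hw (fun x hx => hs x (by simp [hx]))
    refine ⟨Walk.cons (by simp [h] : (G.induce U).Adj ⟨a, hu⟩ ⟨b, hb⟩) q, ?_, ?_⟩
    · simp [Walk.support_cons, hq1]
    · simp [Walk.edges_cons, hq2]


end Aux

/-- A set `U` of vertices of a simple graph `G` induces a linear forest:
the induced subgraph is acyclic and every vertex of `U` has at most 2 neighbors in `U`. -/
def InducesLinearForest {V : Type*} (G : SimpleGraph V) (U : Set V) : Prop :=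
  (G.induce U).IsAcyclic ∧ ∀ v ∈ U, {w | w ∈ U ∧ G.Adj v w}.ncard ≤ 2

private lemma colorGraph_acyclic {V : Type*} {G : SimpleGraph V} {k : ℕ} {c : V → Fin k}
    (hLF : ∀ i : Fin k, InducesLinearForest G {v | c v = i}) :
    (colorGraph G c).IsAcyclic := by
  intro v p hp
  -- color constancy along walks in colorGraph
  have hcol : ∀ {a b : V} (q : (colorGraph G c).Walk a b), ∀ x ∈ q.support, c x = c a := by
    intro a b q
    induction q with
    | nil => intro x hx; simp at hx; subst hx; rfl
    | @cons a a' b h q ih =>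
      intro x hx
      rcases (by simpa [Walk.support_cons] using hx : x = a ∨ x ∈ q.support) with rfl | hx
      · rfl
      · rw [ih x hx, ← h.2]
  have hle : colorGraph G c ≤ G := fun _ _ h => h.1
  set pG : G.Walk v v := p.mapLe hle with hpG
  have hpGc : pG.IsCycle := hp.mapLe hle
  have hsupG : pG.support = p.support := by
    simp [hpG, Walk.support_mapLe_eq_support]
  have hsupU : ∀ x ∈ pG.support, x ∈ {y | c y = c v} := by
    intro x hx
    rw [hsupG] at hx
    exact hcol p x hx
  obtain ⟨q, hq1, hq2⟩ := lift_walk pG (show v ∈ {y | c y = c v} from rfl)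
    (show v ∈ {y | c y = c v} from rfl) hsupU
  have hqc : q.IsCycle := by
    rw [Walk.isCycle_def]
    refine ⟨?_, ?_, ?_⟩
    · rw [Walk.isTrail_def]
      have := hpGc.isTrail.edges_nodup
      rw [← hq2] at this
      exact this.of_map _
    · intro hqnil
      have h3 := hpGc.three_le_length
      have he : pG.edges = [] := by
        rw [← hq2, hqnil]
        simp
      have hl := Walk.length_edges pG
      rw [he] at hl
      simp at hl
      omega
    · have : pG.support.tail.Nodup := hpGc.2
      rw [← hq1, ← List.map_tail] at this
      exact this.of_map _
  exact (hLF (c v)).1 q hqc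


theorem stmt14 {V : Type*} [Fintype V] (G : SimpleGraph V) (k : ℕ) (hk : 0 < k) :
    (∃ c : V → Fin k, ∀ i : Fin k, InducesLinearForest G {v | c v = i}) ↔
      (∃ (c : V → Fin k) (L : LinearOrder V), ∀ u w : V, G.Adj u w → c u = c w →
        ¬ ∃ v : V, (L.lt u v ∧ L.lt v w) ∨ (L.lt w v ∧ L.lt v u)) := by
  classical
  constructor
  · rintro ⟨c, hLF⟩
    refine ⟨c, ?_⟩
    rcases isEmpty_or_nonempty V with hV | hV
    · refine ⟨LinearOrder.lift' (fun _ : V => (0 : ℕ)) (fun a => isEmptyElim a), ?_⟩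
      intro u
      exact isEmptyElim u
    · set G' := colorGraph G c with hG'
      have hac : G'.IsAcyclic := colorGraph_acyclic hLF
      have hdeg : ∀ v : V, {w | G'.Adj v w}.ncard ≤ 2 := by
        intro x
        have h2 := (hLF (c x)).2 x rfl
        have hset : {w | G'.Adj x w} = {w | w ∈ {y | c y = c x} ∧ G.Adj x w} := by
          ext w
          simp only [hG', colorGraph, Set.mem_setOf_eq]
          tauto
        rw [hset]
        exact h2
      obtain ⟨v, hv, hv1⟩ := exists_leaf G' hac Finset.univ Finset.univ_nonempty
      obtain ⟨l, hnd, hfin, -, hcons⟩ :=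
        exists_list G' hac hdeg Finset.univ.card Finset.univ rfl v hv hv1
      have hmem : ∀ x : V, x ∈ l := by
        intro x
        rw [← List.mem_toFinset, hfin]
        exact Finset.mem_univ x
      have hinj : Function.Injective (fun x : V => l.idxOf x) := by
        intro a b h
        exact (List.idxOf_inj (hmem a)).mp h
      refine ⟨LinearOrder.lift' (fun x : V => l.idxOf x) hinj, ?_⟩
      intro u w hadj hcuw
      rintro ⟨v', hv'⟩
      have hG'adj : G'.Adj u w := ⟨hadj, hcuw⟩
      have hcuw' := hcons u w (Finset.mem_univ u) (Finset.mem_univ w) hG'adj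
      have hlt : ∀ a b : V, (LinearOrder.lift' (fun x : V => l.idxOf x) hinj).lt a b ↔
          l.idxOf a < l.idxOf b := fun a b => Iff.rfl
      rcases hv' with ⟨h1, h2⟩ | ⟨h1, h2⟩ <;>
        rw [hlt] at h1 h2 <;> omega
  · rintro ⟨c, L, h⟩
    refine ⟨c, ?_⟩
    letI := L
    set d := (Fintype.orderIsoFinOfCardEq V rfl).symm with hd
    set f : V → ℕ := fun v => (d v : ℕ) with hf
    have hfinj : Function.Injective f := by
      intro a b hab
      exact d.injective (Fin.ext hab)
    have hconsec : ∀ u w : V, G.Adj u w → c u = c w → f u + 1 = f w ∨ f w + 1 = f u := by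
      intro u w hadj hc
      have hne : u ≠ w := hadj.ne
      have hnb := h u w hadj hc
      rcases lt_or_gt_of_ne hne with h1 | h1
      · left
        have hflt : f u < f w := d.strictMono h1
        by_contra hne2
        have hlt2 : f u + 1 < f w := by omega
        have hj : f u + 1 < Fintype.card V := lt_trans hlt2 (d w).isLt
        refine hnb ⟨d.symm ⟨f u + 1, hj⟩, Or.inl ⟨?_, ?_⟩⟩
        · refine d.lt_iff_lt.mp ?_
          rw [OrderIso.apply_symm_apply]
          simp [Fin.lt_def, hf]
        · refine d.lt_iff_lt.mp ?_
          rw [OrderIso.apply_symm_apply]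
          simpa [Fin.lt_def] using hlt2
      · right
        have hflt : f w < f u := d.strictMono h1
        by_contra hne2
        have hlt2 : f w + 1 < f u := by omega
        have hj : f w + 1 < Fintype.card V := lt_trans hlt2 (d u).isLt
        refine hnb ⟨d.symm ⟨f w + 1, hj⟩, Or.inr ⟨?_, ?_⟩⟩
        · refine d.lt_iff_lt.mp ?_
          rw [OrderIso.apply_symm_apply]
          simp [Fin.lt_def, hf]
        · refine d.lt_iff_lt.mp ?_
          rw [OrderIso.apply_symm_apply]
          simpa [Fin.lt_def] using hlt2
    have hHac : (colorGraph G c).IsAcyclic :=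
      acyclic_of_consec _ f hfinj (fun u w hadj => hconsec u w hadj.1 hadj.2)
    intro i
    constructor
    · -- acyclicity of the induced graph on the color class
      intro x q hq
      set U : Set V := {v | c v = i} with hU
      let φ : (G.induce U) →g (colorGraph G c) :=
        ⟨Subtype.val, fun {a b} hab => ⟨hab, by
          rw [(a.2 : c a.val = i), (b.2 : c b.val = i)]⟩⟩
      have hφinj : Function.Injective ⇑φ := fun a b hh => Subtype.ext hh
      exact hHac _ ((Walk.map_isCycle_iff_of_injective hφinj).mpr hq)
    · intro v hvU
      set S : Set V := {w | w ∈ {v_1 | c v_1 = i} ∧ G.Adj v w} with hS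
      have hmapsto : ∀ w ∈ S, (decide (f w < f v)) ∈ (Set.univ : Set Bool) :=
        fun _ _ => Set.mem_univ _
      have hcases : ∀ w ∈ S, f v + 1 = f w ∨ f w + 1 = f v := by
        intro w hw
        have hcw : c v = c w := by
          have h1 : c w = i := hw.1
          have h2 : c v = i := hvU
          rw [h1, h2]
        exact hconsec v w hw.2 hcw
      have hinjOn : Set.InjOn (fun w => decide (f w < f v)) S := by
        intro w1 hw1 w2 hw2 heq
        simp only [decide_eq_decide] at heq
        rcases hcases w1 hw1 with h1 | h1 <;> rcases hcases w2 hw2 with h2 | h2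
        · exact hfinj (by omega)
        · exact absurd (heq.mpr (by omega)) (by omega)
        · exact absurd (heq.mp (by omega)) (by omega)
        · exact hfinj (by omega)
      have := Set.ncard_le_ncard_of_injOn _ hmapsto hinjOn (Set.finite_univ)
      rwa [Set.ncard_univ, Nat.card_eq_fintype_card, Fintype.card_bool] at this
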